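/- Let y₁, …, y_n be distinct points in ℝ³, let q₁, …, q_n ∈ ℂ, and let φ : ℝ³ → ℂ be in H¹_loc(ℝ³) with |∇φ| ∈ L²(ℝ³). If φ(x) + Σ_{k=1}^n q_k /(4π|x - y_k|) = 0 for almost every x ∈ ℝ³, then q_k = 0 for all k and φ = 0 almost everywhere. -/

import Mathlib

open Real MeasureTheory Metric Filter Set
open scoped Topology ENNReal

set_option maxHeartbeats 1000000
set_option synthInstance.maxHeartbeats 1000000

noncomputable section

local notation "E3" => EuclideanSpace ℝ (Fin 3)

variable {E : Type*} [NormedAddCommGroup E] [InnerProductSpace ℝ E]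

lemma hasFDerivAt_inv_norm {x : E} (hx : x ≠ 0) :
    HasFDerivAt (fun z : E => ‖z‖⁻¹) ((-(‖x‖ ^ 3)⁻¹) • innerSL ℝ x) x := by
  have hsq : HasFDerivAt (fun z : E => ‖z‖ ^ 2) ((2 : ℕ) • innerSL ℝ x) x :=
    (hasStrictFDerivAt_norm_sq x).hasFDerivAt
  have hx2 : (‖x‖ ^ 2 : ℝ) ≠ 0 := by
    have := norm_pos_iff.2 hx; positivity
  have hr : HasDerivAt (fun t : ℝ => t ^ (-(1/2) : ℝ))
      ((-(1/2) : ℝ) * (‖x‖ ^ 2) ^ ((-(1/2) : ℝ) - 1)) (‖x‖ ^ 2) :=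
    Real.hasDerivAt_rpow_const (Or.inl hx2)
  have h := hr.comp_hasFDerivAt x hsq
  have hfun : (fun z : E => (‖z‖ ^ 2) ^ (-(1/2) : ℝ)) = fun z : E => ‖z‖⁻¹ := by
    funext z
    rw [← Real.rpow_natCast ‖z‖ 2, ← Real.rpow_mul (norm_nonneg z)]
    norm_num [Real.rpow_neg_one]
  rw [show ((fun t : ℝ => t ^ (-(1/2) : ℝ)) ∘ fun z : E => ‖z‖ ^ 2) = fun z : E => ‖z‖⁻¹ from hfun] at h
  have hsc : (-(1/2) * (‖x‖ ^ 2 : ℝ) ^ ((-(1/2) : ℝ) - 1)) • ((2 : ℕ) • innerSL ℝ x)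
      = (-(‖x‖ ^ 3)⁻¹ : ℝ) • innerSL ℝ x := by
    rw [← Nat.cast_smul_eq_nsmul ℝ, smul_smul]
    congr 1
    have h32 : ((‖x‖ ^ 2 : ℝ)) ^ ((-(1/2) : ℝ) - 1) = (‖x‖ ^ 3)⁻¹ := by
      rw [← Real.rpow_natCast ‖x‖ 2, ← Real.rpow_mul (norm_nonneg x),
        ← Real.rpow_natCast ‖x‖ 3, ← Real.rpow_neg (norm_nonneg x)]
      norm_num
    rw [h32]; ring
  rw [hsc] at h
  exact h


lemma fderiv_eq_zero_of_density {F : Type*} [NormedAddCommGroup F] [NormedSpace ℝ F]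
    {f : E3 → F} {L : E3 →L[ℝ] F} {x : E3} {s : Set E3}
    (hd : HasFDerivAt f L x) (hfx : f x = 0) (hs : ∀ z ∈ s, f z = 0)
    (hdens : Tendsto (fun r => volume (s ∩ closedBall x r) / volume (closedBall x r))
      (𝓝[>] 0) (𝓝 1)) : L = 0 := by
  by_contra hL
  obtain ⟨w, hw⟩ : ∃ w, L w ≠ 0 := by
    by_contra h; push_neg at h; exact hL (ContinuousLinearMap.ext fun w => h w)
  have hw0 : w ≠ 0 := fun h => hw (by simp [h])
  set v := ‖w‖⁻¹ • w with hv
  have hv1 : ‖v‖ = 1 := by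
    rw [hv, norm_smul, norm_inv, norm_norm, inv_mul_cancel₀ (norm_ne_zero_iff.2 hw0)]
  have hLv : L v ≠ 0 := by
    rw [hv, _root_.map_smul]
    simp only [ne_eq, smul_eq_zero, inv_eq_zero, norm_eq_zero, not_or]
    exact ⟨hw0, hw⟩
  set c := ‖L v‖ with hc
  have hc0 : 0 < c := norm_pos_iff.2 hLv
  have hLn : (0:ℝ) ≤ ‖L‖ := norm_nonneg L
  set δ := c / (4 * (‖L‖ + 1)) with hδ
  have hδ0 : 0 < δ := by positivity
  have hcL : c ≤ ‖L‖ := by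
    calc c = ‖L v‖ := rfl
    _ ≤ ‖L‖ * ‖v‖ := L.le_opNorm v
    _ = ‖L‖ := by rw [hv1, mul_one]
  have hδ1 : δ ≤ 1 := by
    rw [hδ, div_le_one (by positivity)]
    nlinarith
  have hLδ : ‖L‖ * δ ≤ c / 4 := by
    rw [hδ, ← mul_div_assoc, div_le_div_iff₀ (by positivity) (by norm_num)]
    nlinarith
  -- little-o estimate
  have hlo := hd.isLittleO.def (show (0:ℝ) < c/8 by positivity)
  rw [Metric.eventually_nhds_iff] at hlo
  obtain ⟨r₀, hr₀pos, hr₀⟩ := hlo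
  -- key geometric claim
  have key : ∀ t : ℝ, 0 < t → t < r₀ / 2 →
      ∀ z ∈ closedBall (x + t • v) (δ * t), f z ≠ 0 := by
    intro t ht0 htr z hz
    rw [mem_closedBall, dist_eq_norm] at hz
    have hz' : ‖z - x - t • v‖ ≤ δ * t := by
      have : z - (x + t • v) = z - x - t • v := by abel
      rwa [this] at hz
    have hu2 : ‖z - x‖ ≤ 2 * t := by
      calc ‖z - x‖ = ‖(z - x - t • v) + t • v‖ := by congr 1; abel
      _ ≤ ‖z - x - t • v‖ + ‖t • v‖ := norm_add_le _ _
      _ ≤ δ * t + t := by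
          rw [norm_smul, hv1, mul_one, Real.norm_eq_abs, abs_of_pos ht0]
          linarith
      _ ≤ 2 * t := by nlinarith
    have hLtv : ‖L (t • v)‖ = t * c := by
      rw [_root_.map_smul, norm_smul, Real.norm_eq_abs, abs_of_pos ht0]
    have hLu : (3/4) * c * t ≤ ‖L (z - x)‖ := by
      have h1 : ‖L (z - x) - L (t • v)‖ ≤ c / 4 * t := by
        rw [← map_sub]
        calc ‖L (z - x - t • v)‖ ≤ ‖L‖ * ‖z - x - t • v‖ := L.le_opNorm _
        _ ≤ ‖L‖ * (δ * t) := by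
            apply mul_le_mul_of_nonneg_left hz' hLn
        _ = ‖L‖ * δ * t := by ring
        _ ≤ c / 4 * t := mul_le_mul_of_nonneg_right hLδ ht0.le
      calc (3/4) * c * t = t * c - c/4 * t := by ring
      _ ≤ ‖L (t • v)‖ - ‖L (z - x) - L (t • v)‖ := by rw [hLtv]; linarith
      _ ≤ ‖L (z - x)‖ := by
          have := norm_sub_norm_le (L (t • v)) (L (z - x))
          have h2 : ‖L (t • v) - L (z - x)‖ = ‖L (z - x) - L (t • v)‖ := norm_sub_rev _ _
          linarith [norm_sub_norm_le (L (t • v)) (L (z - x)), h2.le]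
    have hzr : dist z x < r₀ := by
      rw [dist_eq_norm]; linarith
    have happ := hr₀ hzr
    rw [hfx, sub_zero] at happ
    have : c / 2 * t ≤ ‖f z‖ := by
      have h3 : ‖f z‖ ≥ ‖L (z - x)‖ - ‖f z - L (z - x)‖ := by
        have := norm_sub_norm_le (f z) (L (z - x))
        linarith [norm_sub_norm_le (L (z - x)) (f z), (norm_sub_rev (L (z - x)) (f z)).le]
      have h4 : ‖f z - L (z - x)‖ ≤ c/8 * (2*t) := by
        calc ‖f z - L (z - x)‖ ≤ c/8 * ‖z - x‖ := happ
        _ ≤ c/8 * (2*t) := by nlinarith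
      linarith
    intro hfz
    rw [hfz, norm_zero] at this
    nlinarith
  -- measure estimate
  set V := volume (ball (0:E3) 1) with hV
  have hV0 : V ≠ 0 := (measure_ball_pos volume 0 one_pos).ne'
  set κ := (δ / (1 + δ)) ^ 3 with hκ
  have hκ0 : 0 < κ := by positivity
  set k := ENNReal.ofReal κ with hk
  have hk0 : k ≠ 0 := by
    simp [hk, ENNReal.ofReal_eq_zero, not_le, hκ0]
  have hbound : ∀ᶠ ρ in 𝓝[>] (0:ℝ),
      volume (s ∩ closedBall x ρ) / volume (closedBall x ρ) ≤ 1 - k := by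
    have hmem : Ioo (0:ℝ) ((1+δ) * (r₀/2)) ∈ 𝓝[>] (0:ℝ) :=
      Ioo_mem_nhdsGT_of_mem ⟨le_rfl, by positivity⟩
    filter_upwards [hmem] with ρ hρ
    obtain ⟨hρ0, hρlt⟩ := hρ
    set t := ρ / (1 + δ) with ht
    have ht0 : 0 < t := by positivity
    have htr : t < r₀ / 2 := by
      rw [ht, div_lt_iff₀ (by positivity)]
      calc ρ < (1+δ) * (r₀/2) := hρlt
      _ = r₀ / 2 * (1 + δ) := by ring
    have hsub : s ∩ closedBall x ρ ⊆ closedBall x ρ \ closedBall (x + t • v) (δ * t) := by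
      rintro z ⟨hzs, hzB⟩
      refine ⟨hzB, fun hzB' => ?_⟩
      exact key t ht0 htr z hzB' (hs z hzs)
    have hBsub : closedBall (x + t • v) (δ * t) ⊆ closedBall x ρ := by
      intro z hz
      rw [mem_closedBall] at hz ⊢
      calc dist z x ≤ dist z (x + t • v) + dist (x + t • v) x := dist_triangle _ _ _
      _ ≤ δ * t + t := by
          have : dist (x + t • v) x = t := by
            rw [dist_eq_norm, add_sub_cancel_left, norm_smul, hv1, mul_one,
              Real.norm_eq_abs, abs_of_pos ht0]
          rw [this]; linarith
      _ = ρ := by rw [ht]; field_simp; ring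
    have hA : volume (closedBall x ρ) = ENNReal.ofReal (ρ ^ 3) * V := by
      rw [Measure.addHaar_closedBall volume x hρ0.le]
      congr 2
      simp [finrank_euclideanSpace_fin]
    have hB' : volume (closedBall (x + t • v) (δ * t)) = k * volume (closedBall x ρ) := by
      rw [Measure.addHaar_closedBall volume _ (by positivity : (0:ℝ) ≤ δ * t), hA]
      rw [← mul_assoc, ← ENNReal.ofReal_mul hκ0.le]
      congr 2
      · simp only [finrank_euclideanSpace_fin]
        rw [hκ, ht]
        field_simp
    set A := volume (closedBall x ρ) with hAdef
    have hAne : A ≠ 0 := by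
      rw [hA]
      exact mul_ne_zero (by simp [ENNReal.ofReal_eq_zero, not_le]; positivity) hV0
    have hAtop : A ≠ ⊤ := measure_closedBall_lt_top.ne
    have hmono : volume (s ∩ closedBall x ρ) ≤ A - k * A := by
      calc volume (s ∩ closedBall x ρ)
          ≤ volume (closedBall x ρ \ closedBall (x + t • v) (δ * t)) := measure_mono hsub
      _ = A - volume (closedBall (x + t • v) (δ * t)) :=
          measure_diff hBsub measurableSet_closedBall.nullMeasurableSet
            measure_closedBall_lt_top.ne
      _ = A - k * A := by rw [hB']
    have hsubmul : A - k * A = (1 - k) * A := by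
      rw [ENNReal.sub_mul (fun _ _ => hAtop), one_mul]
    calc volume (s ∩ closedBall x ρ) / A ≤ (A - k * A) / A :=
        ENNReal.div_le_div_right hmono A
    _ = (1 - k) * A / A := by rw [hsubmul]
    _ = 1 - k := by rw [mul_div_assoc, ENNReal.div_self hAne hAtop, mul_one]
  have hle : (1:ℝ≥0∞) ≤ 1 - k := le_of_tendsto hdens hbound
  have : (1:ℝ≥0∞) - k < 1 := ENNReal.sub_lt_self ENNReal.one_ne_top one_ne_zero hk0
  exact absurd hle (not_le.2 this)


lemma fderiv_ae_eq_aux {f g : E3 → ℂ}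
    (hf : ∀ᵐ x ∂(volume : Measure E3), DifferentiableAt ℝ f x)
    (hg : ∀ᵐ x ∂(volume : Measure E3), DifferentiableAt ℝ g x)
    (hfg : f =ᵐ[volume] g) :
    (fun x => fderiv ℝ f x) =ᵐ[volume] fun x => fderiv ℝ g x := by
  set N := {x : E3 | f x ≠ g x} with hN
  have hNnull : volume N = 0 := hfg
  set s := (toMeasurable volume N)ᶜ with hsdef
  have hsm : MeasurableSet s := (measurableSet_toMeasurable _ _).compl
  have hscnull : volume sᶜ = 0 := by
    rw [hsdef, compl_compl, measure_toMeasurable]; exact hNnull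
  have hseq : ∀ z ∈ s, f z = g z := by
    intro z hz
    by_contra h
    exact hz (subset_toMeasurable volume N h)
  have hmem : ∀ᵐ x ∂(volume : Measure E3), x ∈ s := by
    rw [ae_iff]
    convert hscnull using 2
    rfl
  have hdens := Besicovitch.ae_tendsto_measure_inter_div_of_measurableSet volume hsm
  filter_upwards [hf, hg, hmem, hdens] with x hfx hgx hxs hxd
  have hind : s.indicator (1 : E3 → ℝ≥0∞) x = 1 := by
    rw [indicator_of_mem hxs]; rfl
  rw [hind] at hxd
  have hsub : HasFDerivAt (fun z => f z - g z) (fderiv ℝ f x - fderiv ℝ g x) x :=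
    hfx.hasFDerivAt.sub hgx.hasFDerivAt
  have hz : fderiv ℝ f x - fderiv ℝ g x = 0 :=
    fderiv_eq_zero_of_density hsub (by rw [sub_eq_zero]; exact hseq x hxs)
      (fun z hz => by rw [hseq z hz, sub_self]) hxd
  exact sub_eq_zero.1 hz


lemma not_integrableOn_inv_pow_four (z : E3) {ε : ℝ} (hε : 0 < ε) {c : ℝ} (hc : 0 < c) :
    ¬ IntegrableOn (fun x : E3 => c * (‖x - z‖⁻¹) ^ 4) (ball z ε) volume := by
  intro h
  have hfin := h.2
  rw [hasFiniteIntegral_def] at hfin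
  set g : E3 → ℝ≥0∞ := fun x => (‖c * (‖x - z‖⁻¹) ^ 4‖₊ : ℝ≥0∞) with hg
  set A : ℕ → Set E3 := fun m => ball z (ε / 2 ^ m) \ ball z (ε / 2 ^ (m + 1)) with hA
  have hAmeas : ∀ m, MeasurableSet (A m) :=
    fun m => measurableSet_ball.diff measurableSet_ball
  have hdisj : Pairwise (Function.onFun Disjoint A) := by
    have hmono : ∀ m m' : ℕ, m < m' → Disjoint (A m) (A m') := by
      intro m m' hmm'
      rw [Set.disjoint_left]
      rintro x ⟨hx1, hx2⟩ ⟨hx1', _⟩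
      apply hx2
      apply mem_of_mem_of_subset hx1'
      apply ball_subset_ball
      apply div_le_div_of_nonneg_left hε.le (by positivity)
      exact pow_le_pow_right₀ one_le_two hmm'
    intro m m' hne
    rcases lt_or_gt_of_ne hne with h' | h'
    · exact hmono _ _ h'
    · exact (hmono _ _ h').symm
  have hsub : (⋃ m, A m) ⊆ ball z ε := by
    apply iUnion_subset
    intro m
    refine diff_subset.trans (ball_subset_ball ?_)
    apply div_le_self hε.le
    exact one_le_pow₀ one_le_two
  set V := volume (ball (0:E3) 1) with hV
  have hV0 : V ≠ 0 := (measure_ball_pos volume 0 one_pos).ne'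
  have hVtop : V ≠ ⊤ := measure_ball_lt_top.ne
  set K := ENNReal.ofReal (c * (7/8) * ε⁻¹) * V with hK
  have hK0 : K ≠ 0 := by
    apply mul_ne_zero _ hV0
    simp only [ne_eq, ENNReal.ofReal_eq_zero, not_le]
    positivity
  -- lower bound on each annulus
  have hann : ∀ m : ℕ, K ≤ ∫⁻ x in A m, g x ∂volume := by
    intro m
    set r := ε / 2 ^ m with hr
    have hr0 : 0 < r := by positivity
    have hmuA : volume (A m) = ENNReal.ofReal ((7/8) * r ^ 3) * V := by
      have h2 : ball z (ε / 2 ^ (m+1)) ⊆ ball z r := by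
        apply ball_subset_ball
        rw [hr]
        apply div_le_div_of_nonneg_left hε.le (by positivity)
        exact pow_le_pow_right₀ one_le_two (Nat.le_succ m)
      rw [hA]
      simp only
      rw [measure_diff h2 measurableSet_ball.nullMeasurableSet measure_ball_lt_top.ne]
      rw [Measure.addHaar_ball volume z hr0.le,
        Measure.addHaar_ball volume z (by positivity : (0:ℝ) ≤ ε / 2 ^ (m+1))]
      rw [← ENNReal.sub_mul (fun _ _ => hVtop), ← ENNReal.ofReal_sub _ (by positivity)]
      congr 2
      simp only [finrank_euclideanSpace_fin]
      rw [hr]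
      rw [pow_succ]
      field_simp
      ring
    have hlow : ∀ x ∈ A m, ENNReal.ofReal (c * (2 ^ m / ε) ^ 4) ≤ g x := by
      intro x hx
      have hx1 := hx.1
      rw [mem_ball, dist_eq_norm] at hx1
      have hub : ‖x - z‖ < r := hx1
      have hinv : r⁻¹ ≤ ‖x - z‖⁻¹ ∨ ‖x - z‖ = 0 := by
        rcases eq_or_ne ‖x - z‖ 0 with h0 | h0
        · right; exact h0
        · left
          apply inv_anti₀ (lt_of_le_of_ne (norm_nonneg _) (Ne.symm h0)) hub.le
      have key : c * (2 ^ m / ε) ^ 4 ≤ c * (‖x - z‖⁻¹) ^ 4 ∨ ‖x - z‖ = 0 := by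
        rcases hinv with h1 | h1
        · left
          apply mul_le_mul_of_nonneg_left _ hc.le
          apply pow_le_pow_left₀ (by positivity)
          rw [hr] at h1
          rw [inv_div] at h1
          exact h1
        · right; exact h1
      rcases key with h1 | h1
      · rw [hg]
        simp only
        rw [show ((‖c * (‖x - z‖⁻¹) ^ 4‖₊ : ℝ≥0∞)) = ‖c * (‖x - z‖⁻¹) ^ 4‖ₑ from rfl, Real.enorm_eq_ofReal (by positivity)]
        exact ENNReal.ofReal_le_ofReal h1
      · -- x = z: then ‖x-z‖⁻¹ = 0... but x ∈ ball z r \ ball z r/2 means ‖x-z‖ ≥ r/2 > 0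
        exfalso
        apply hx.2
        rw [mem_ball, dist_eq_norm, h1]
        positivity
    have : ENNReal.ofReal (c * (2 ^ m / ε) ^ 4) * volume (A m) ≤ ∫⁻ x in A m, g x ∂volume := by
      rw [← setLIntegral_const (A m) _]
      exact setLIntegral_mono' (hAmeas m) hlow
    refine le_trans ?_ this
    rw [hmuA, ← mul_assoc, ← ENNReal.ofReal_mul (by positivity)]
    rw [hK]
    apply mul_le_mul_left (ENNReal.ofReal_le_ofReal _)
    rw [hr]
    have h2m : (1:ℝ) ≤ 2 ^ m := one_le_pow₀ one_le_two
    have hεne : ε ≠ 0 := hε.ne'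
    have h2ne : (2:ℝ) ^ m ≠ 0 := by positivity
    have heq : c * ((2:ℝ) ^ m / ε) ^ 4 * (7 / 8 * (ε / 2 ^ m) ^ 3) = c * (7/8) * (2^m/ε) := by
      field_simp
    rw [heq]
    have h1 : ε⁻¹ ≤ 2^m / ε := by
      rw [div_eq_mul_inv]
      nlinarith [inv_pos.2 hε]
    exact mul_le_mul_of_nonneg_left h1 (by positivity)
  have htop : (∫⁻ x in ball z ε, g x ∂volume) = ⊤ := by
    have h1 : (∫⁻ x in ⋃ m, A m, g x ∂volume) ≤ ∫⁻ x in ball z ε, g x ∂volume :=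
      lintegral_mono_set hsub
    rw [lintegral_iUnion hAmeas hdisj] at h1
    refine top_le_iff.1 (le_trans ?_ h1)
    calc (⊤ : ℝ≥0∞) = ∑' _ : ℕ, K := (ENNReal.tsum_const_eq_top_of_ne_zero hK0).symm
    _ ≤ ∑' m, ∫⁻ x in A m, g x ∂volume := ENNReal.tsum_le_tsum hann
  rw [show (∫⁻ x in ball z ε, ‖c * (‖x - z‖⁻¹) ^ 4‖ₑ ∂volume) = ⊤ from htop] at hfin
  exact absurd hfin (lt_irrefl _)


/-- Uniqueness of the decomposition defining the form domain of the point-interaction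
Hamiltonian: if `φ` is locally integrable and a.e. differentiable with `|∇φ| ∈ L²(ℝ³)`,
`y₁,…,yₙ` are distinct points and `φ + Σ q_k G(·-y_k) = 0` a.e. with
`G(x) = 1/(4π|x|)`, then all charges `q_k` vanish and `φ = 0` a.e. -/
theorem point_charge_decomposition_unique
    (n : ℕ) (y : Fin n → EuclideanSpace ℝ (Fin 3))
    (hy : Function.Injective y) (q : Fin n → ℂ)
    (φ : EuclideanSpace ℝ (Fin 3) → ℂ)
    (hφloc : LocallyIntegrable φ volume)
    (hφdiff : ∀ᵐ x ∂volume, DifferentiableAt ℝ φ x)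
    (hφgrad : MemLp (fun x => ‖fderiv ℝ φ x‖) 2 volume)
    (heq : ∀ᵐ x ∂volume,
      φ x + ∑ k, q k / ((4 * π * ‖x - y k‖ : ℝ) : ℂ) = 0) :
    (∀ k, q k = 0) ∧ φ =ᵐ[volume] 0 := by
  classical
  set a : Fin n → ℂ := fun k => q k * ((4 * π : ℝ) : ℂ)⁻¹ with ha
  set ψ : E3 → ℂ := fun x => -∑ k, a k * ((‖x - y k‖⁻¹ : ℝ) : ℂ) with hψ
  have hGeq : ∀ (k : Fin n) (x : E3),
      q k / ((4 * π * ‖x - y k‖ : ℝ) : ℂ) = a k * ((‖x - y k‖⁻¹ : ℝ) : ℂ) := by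
    intro k x
    rw [ha]
    simp only
    rcases eq_or_ne (‖x - y k‖) 0 with h | h
    · simp [h]
    · push_cast
      have h4 : ((4:ℂ) * (π:ℂ)) ≠ 0 := by
        simp only [ne_eq, mul_eq_zero, not_or]
        constructor
        · norm_num
        · exact_mod_cast Real.pi_ne_zero
      have hc : ((‖x - y k‖ : ℝ) : ℂ) ≠ 0 := by exact_mod_cast h
      field_simp
  have hφψ : φ =ᵐ[volume] ψ := by
    filter_upwards [heq] with x hx
    rw [hψ]
    simp only [← hGeq]
    exact eq_neg_of_add_eq_zero_left hx
  -- derivative of ψ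
  set Bk : Fin n → E3 → (E3 →L[ℝ] ℝ) :=
    fun k x => (-(‖x - y k‖ ^ 3)⁻¹ : ℝ) • innerSL ℝ (x - y k) with hBk
  set Dk : Fin n → E3 → (E3 →L[ℝ] ℂ) :=
    fun k x => a k • (Complex.ofRealCLM.comp (Bk k x)) with hDk
  set D : E3 → (E3 →L[ℝ] ℂ) := fun x => -∑ k, Dk k x with hD
  clear_value D
  have hterm : ∀ (k : Fin n) (x : E3), x ≠ y k →
      HasFDerivAt (fun z : E3 => a k * ((‖z - y k‖⁻¹ : ℝ) : ℂ)) (Dk k x) x := by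
    intro k x hx
    have h0 : x - y k ≠ 0 := sub_ne_zero.2 hx
    have h1 : HasFDerivAt (fun z : E3 => ‖z - y k‖⁻¹) (Bk k x) x := by
      have hc := (hasFDerivAt_inv_norm h0).comp x ((hasFDerivAt_id x).sub_const (y k))
      simpa [hBk, Function.comp_def] using hc
    have h2 := (Complex.ofRealCLM.hasFDerivAt.comp x h1)
    exact h2.const_mul (a k)
  have hψD : ∀ x : E3, (∀ k, x ≠ y k) → HasFDerivAt ψ (D x) x := by
    intro x hx
    rw [hψ, hD]
    exact (HasFDerivAt.fun_sum (fun k _ => hterm k x (hx k))).neg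
  have hrange : ∀ᵐ x ∂(volume : Measure E3), ∀ k, x ≠ y k := by
    have : volume (⋃ k, {y k}) = 0 := by
      rw [measure_iUnion_null_iff]
      intro k
      exact measure_singleton _
    rw [ae_iff]
    have hset : {x : E3 | ¬∀ k, x ≠ y k} = ⋃ k, {y k} := by
      ext x
      simp [eq_comm]
    rw [hset]
    exact this
  have hψdiff : ∀ᵐ x ∂(volume : Measure E3), DifferentiableAt ℝ ψ x := by
    filter_upwards [hrange] with x hx
    exact (hψD x hx).differentiableAt
  have hfeq : (fun x => fderiv ℝ φ x) =ᵐ[volume] fun x => fderiv ℝ ψ x :=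
    fderiv_ae_eq_aux hφdiff hψdiff hφψ
  -- all charges vanish
  have hq : ∀ k, q k = 0 := by
    intro j
    by_contra hqj
    set cj := ‖q j‖ * (4 * π)⁻¹ with hcj
    have hπ : (0:ℝ) < 4 * π := by positivity
    have hcj0 : 0 < cj := by
      rw [hcj]
      have : 0 < ‖q j‖ := norm_pos_iff.2 hqj
      positivity
    have hnormaj : ‖a j‖ = cj := by
      rw [ha, hcj]
      simp only [norm_mul, norm_inv]
      congr 1
      rw [Complex.norm_real, Real.norm_eq_abs, abs_of_pos hπ]
    -- separation radius
    set dm := Finset.univ.inf' (Finset.univ_nonempty_iff.2 ⟨j⟩)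
      (fun k => if k = j then 1 else dist (y j) (y k)) with hdm
    have hdm0 : 0 < dm := by
      rw [hdm]
      rw [Finset.lt_inf'_iff]
      intro k _
      by_cases hk : k = j
      · simp [hk]
      · simp only [hk, if_false]
        exact dist_pos.2 fun h => hk (hy h.symm)
    set ε := dm / 2 with hε
    have hε0 : 0 < ε := by positivity
    have hsep : ∀ k, k ≠ j → 2 * ε ≤ dist (y j) (y k) := by
      intro k hk
      have := Finset.inf'_le (b := k) (fun k => if k = j then (1:ℝ) else dist (y j) (y k))
        (Finset.mem_univ k)
      rw [if_neg hk] at this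
      rw [hε]
      linarith [this]
    clear_value dm ε
    clear_value cj
    set C := (∑ k ∈ Finset.univ.erase j, ‖a k‖) * (ε⁻¹) ^ 2 with hC
    have hC0 : 0 ≤ C := by
      rw [hC]
      apply mul_nonneg (Finset.sum_nonneg fun k _ => norm_nonneg _) (by positivity)
    set ε₂ := min ε (Real.sqrt (cj / (2 * (C + 1)))) with hε₂
    clear_value C
    have hquot : 0 < cj / (2 * (C + 1)) := div_pos hcj0 (by linarith)
    have hε₂0 : 0 < ε₂ := by
      rw [hε₂]
      exact lt_min hε0 (Real.sqrt_pos.2 hquot)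
    have hε₂le : ε₂ ≤ ε := min_le_left _ _
    have hε₂sq : ε₂ ≤ Real.sqrt (cj / (2 * (C + 1))) := min_le_right _ _
    clear_value ε₂
    -- pointwise lower bound on D
    have hlower : ∀ x : E3, x ∈ ball (y j) ε₂ → (∀ k, x ≠ y k) →
        cj / 2 * (‖x - y j‖⁻¹) ^ 2 ≤ ‖D x‖ := by
      intro x hxB hxk
      set r := ‖x - y j‖ with hr
      have hr0 : 0 < r := norm_pos_iff.2 (sub_ne_zero.2 (hxk j))
      have hrε₂ : r < ε₂ := by
        rw [mem_ball, dist_eq_norm] at hxB; exact hxB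
      set v : E3 := r⁻¹ • (x - y j) with hv
      have hv1 : ‖v‖ = 1 := by
        rw [hv, norm_smul, norm_inv, norm_norm, ← hr, inv_mul_cancel₀ hr0.ne']
      clear_value v r
      -- evaluation of the j-th term
      have hBjv : Bk j x v = -(r⁻¹) ^ 2 := by
        rw [hBk]
        simp only [ContinuousLinearMap.coe_smul', Pi.smul_apply, smul_eq_mul]
        rw [innerSL_apply_apply, hv, real_inner_smul_right, real_inner_self_eq_norm_sq, ← hr]
        field_simp
      have hDjv : ‖Dk j x v‖ = cj * (r⁻¹) ^ 2 := by
        rw [hDk]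
        simp only [ContinuousLinearMap.coe_smul', Pi.smul_apply, smul_eq_mul,
          ContinuousLinearMap.coe_comp', Function.comp_apply]
        rw [norm_mul, hnormaj, hBjv]
        congr 1
        rw [Complex.ofRealCLM_apply, Complex.norm_real, Real.norm_eq_abs, abs_neg,
          abs_of_pos (pow_pos (inv_pos.2 hr0) 2)]
      -- bounds on others
      have hDkle : ∀ k, k ≠ j → ‖Dk k x‖ ≤ ‖a k‖ * (ε⁻¹) ^ 2 := by
        intro k hk
        have hxkd : ε ≤ ‖x - y k‖ := by
          have h1 : dist (y j) (y k) ≤ dist (y j) x + dist x (y k) := dist_triangle _ _ _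
          have h2 : dist (y j) x < ε₂ := by
            rw [mem_ball] at hxB
            rw [dist_comm]; exact hxB
          have h3 : ε₂ ≤ ε := hε₂le
          have h4 := hsep k hk
          have h5 : dist x (y k) = ‖x - y k‖ := dist_eq_norm _ _
          linarith
        have hxk0 : (0:ℝ) < ‖x - y k‖ := lt_of_lt_of_le hε0 hxkd
        have hinv2 : (‖x - y k‖⁻¹) ^ 2 ≤ (ε⁻¹) ^ 2 := by
          apply pow_le_pow_left₀ (inv_nonneg.2 (norm_nonneg _))
          exact inv_anti₀ hε0 hxkd
        have hnBk : ‖Bk k x‖ ≤ (ε⁻¹) ^ 2 := by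
          apply ContinuousLinearMap.opNorm_le_bound _ (pow_nonneg (inv_nonneg.2 hε0.le) 2)
          intro u
          have happ : (Bk k x) u = -(‖x - y k‖ ^ 3)⁻¹ * (inner ℝ (x - y k) u : ℝ) := by
            simp only [hBk, ContinuousLinearMap.coe_smul', Pi.smul_apply, smul_eq_mul,
              innerSL_apply_apply]
          rw [happ, Real.norm_eq_abs, abs_mul, abs_neg, abs_inv, abs_pow, abs_norm]
          calc (‖x - y k‖ ^ 3)⁻¹ * |(inner ℝ (x - y k) u : ℝ)|
              ≤ (‖x - y k‖ ^ 3)⁻¹ * (‖x - y k‖ * ‖u‖) := by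
                apply mul_le_mul_of_nonneg_left (abs_real_inner_le_norm _ _)
                  (inv_nonneg.2 (pow_nonneg (norm_nonneg _) 3))
          _ = (‖x - y k‖⁻¹) ^ 2 * ‖u‖ := by field_simp
          _ ≤ (ε⁻¹) ^ 2 * ‖u‖ := mul_le_mul_of_nonneg_right hinv2 (norm_nonneg u)
        have hcomp : ‖Complex.ofRealCLM.comp (Bk k x)‖ ≤ ‖Bk k x‖ := by
          apply ContinuousLinearMap.opNorm_le_bound _ (norm_nonneg _)
          intro u
          simp only [ContinuousLinearMap.coe_comp', Function.comp_apply]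
          rw [Complex.ofRealCLM_apply, Complex.norm_real]
          exact (Bk k x).le_opNorm u
        calc ‖Dk k x‖ ≤ ‖a k‖ * ‖Complex.ofRealCLM.comp (Bk k x)‖ := by
              simp only [hDk]
              exact le_of_eq (norm_smul (a k) (Complex.ofRealCLM.comp (Bk k x)))
        _ ≤ ‖a k‖ * ‖Bk k x‖ := by
              apply mul_le_mul_of_nonneg_left hcomp (norm_nonneg _)
        _ ≤ ‖a k‖ * (ε⁻¹) ^ 2 := by
              apply mul_le_mul_of_nonneg_left hnBk (norm_nonneg _)
      -- assemble
      have hsum : (∑ k, Dk k x) v = Dk j x v + ∑ k ∈ Finset.univ.erase j, Dk k x v := by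
        rw [ContinuousLinearMap.sum_apply]
        rw [← Finset.add_sum_erase _ _ (Finset.mem_univ j)]
      have hrest : ‖∑ k ∈ Finset.univ.erase j, Dk k x v‖ ≤ C := by
        calc ‖∑ k ∈ Finset.univ.erase j, Dk k x v‖
            ≤ ∑ k ∈ Finset.univ.erase j, ‖Dk k x v‖ := norm_sum_le _ _
        _ ≤ ∑ k ∈ Finset.univ.erase j, ‖a k‖ * (ε⁻¹) ^ 2 := by
            apply Finset.sum_le_sum
            intro k hk
            have hk' : k ≠ j := Finset.ne_of_mem_erase hk
            calc ‖Dk k x v‖ ≤ ‖Dk k x‖ * ‖v‖ := (Dk k x).le_opNorm v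
            _ = ‖Dk k x‖ := by rw [hv1, mul_one]
            _ ≤ ‖a k‖ * (ε⁻¹) ^ 2 := hDkle k hk'
        _ = C := by rw [hC, Finset.sum_mul]
      have hCbound : C + 1 ≤ cj / 2 * (r⁻¹) ^ 2 := by
        have h1 : r < Real.sqrt (cj / (2 * (C + 1))) :=
          lt_of_lt_of_le hrε₂ hε₂sq
        have h2 : r ^ 2 < cj / (2 * (C + 1)) := by
          rw [← Real.lt_sqrt hr0.le]  -- maybe wrong lemma
          exact h1
        have h3 : 0 < 2 * (C + 1) := by linarith
        rw [lt_div_iff₀ h3] at h2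
        have h4 : (r⁻¹) ^ 2 = (r ^ 2)⁻¹ := by rw [inv_pow]
        rw [h4, ← sub_nonneg]
        have hrne : r ≠ 0 := ne_of_gt hr0
        have h5 : cj / 2 * (r ^ 2)⁻¹ - (C + 1) = (cj / 2 - (C + 1) * r ^ 2) / r ^ 2 := by
          field_simp
        rw [h5]
        apply div_nonneg _ (sq_nonneg r)
        nlinarith
      have hDxv : ‖D x v‖ ≥ cj * (r⁻¹) ^ 2 - C := by
        rw [hD]
        simp only [ContinuousLinearMap.neg_apply, norm_neg]
        rw [hsum]
        have := norm_add_le (Dk j x v) (∑ k ∈ Finset.univ.erase j, Dk k x v)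
        have h6 : ‖Dk j x v‖ ≤ ‖Dk j x v + ∑ k ∈ Finset.univ.erase j, Dk k x v‖
            + ‖∑ k ∈ Finset.univ.erase j, Dk k x v‖ := by
          calc ‖Dk j x v‖
              = ‖(Dk j x v + ∑ k ∈ Finset.univ.erase j, Dk k x v)
                - ∑ k ∈ Finset.univ.erase j, Dk k x v‖ := by congr 1; abel
          _ ≤ _ := norm_sub_le _ _
        rw [hDjv] at h6
        linarith
      have h7 : ‖D x v‖ ≤ ‖D x‖ := by
        have := (D x).le_opNorm v
        rw [hv1, mul_one] at this
        exact this
      have h8 : cj * (r⁻¹)^2 - C ≥ cj/2 * (r⁻¹)^2 := by nlinarith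
      linarith
    -- integrability contradiction
    have hsq : Integrable (fun x : E3 => ‖fderiv ℝ φ x‖ ^ 2) volume := hφgrad.integrable_sq
    have hOn : IntegrableOn (fun x : E3 => ‖fderiv ℝ φ x‖ ^ 2) (ball (y j) ε₂) volume :=
      hsq.integrableOn
    have hmaj : ∀ᵐ x ∂(volume.restrict (ball (y j) ε₂)),
        ‖(cj/2)^2 * (‖x - y j‖⁻¹) ^ 4‖ ≤ ‖fderiv ℝ φ x‖ ^ 2 := by
      filter_upwards [ae_restrict_of_ae hfeq, ae_restrict_of_ae hrange,
        ae_restrict_mem measurableSet_ball] with x hfx hxk hxB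
      have hDf : fderiv ℝ ψ x = D x := (hψD x hxk).fderiv
      have hlow := hlower x hxB hxk
      have h0 : 0 ≤ cj / 2 * (‖x - y j‖⁻¹) ^ 2 :=
        mul_nonneg (div_nonneg hcj0.le two_pos.le) (sq_nonneg _)
      have h1 : (cj / 2 * (‖x - y j‖⁻¹) ^ 2) ^ 2 ≤ ‖D x‖ ^ 2 := by
        apply pow_le_pow_left₀ h0 hlow
      rw [Real.norm_eq_abs, abs_of_nonneg (mul_nonneg (sq_nonneg _)
        (pow_nonneg (inv_nonneg.2 (norm_nonneg _)) 4))]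
      calc (cj/2)^2 * (‖x - y j‖⁻¹) ^ 4 = (cj / 2 * (‖x - y j‖⁻¹) ^ 2) ^ 2 := by ring
      _ ≤ ‖D x‖ ^ 2 := h1
      _ = ‖fderiv ℝ φ x‖ ^ 2 := by rw [hfx, hDf]
    have hmeas : AEStronglyMeasurable (fun x : E3 => (cj/2)^2 * (‖x - y j‖⁻¹) ^ 4)
        (volume.restrict (ball (y j) ε₂)) := by
      apply Measurable.aestronglyMeasurable
      apply Measurable.const_mul
      apply Measurable.pow_const
      apply Measurable.inv
      exact (continuous_id.sub continuous_const).norm.measurable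
    have hint : IntegrableOn (fun x : E3 => (cj/2)^2 * (‖x - y j‖⁻¹) ^ 4)
        (ball (y j) ε₂) volume := Integrable.mono' hOn hmeas hmaj
    exact not_integrableOn_inv_pow_four (y j) hε₂0 (by positivity : (0:ℝ) < (cj/2)^2) hint
  refine ⟨hq, ?_⟩
  filter_upwards [heq] with x hx
  simpa [hq] using hx
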